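/- Let k, m be positive integers with m | k and q := k/m even, and let A be a uniformly random subset of {0,1,...,k+2m−1}. Then the probability that none of k, k+1, ..., k+2m−1 lies in A + A is at most 2^{q/2}·(1/2^m)^{q/2+1} = 2^{k/2m}·(1/2)^{(k+2m)/2}. -/

import Mathlib

open scoped Pointwise

private def blk (m i : ℕ) : Finset ℕ := Finset.Ico (i * m) (i * m + m)

private lemma blk_card (m i : ℕ) : (blk m i).card = m := by
  simp [blk]

private lemma blk_disjoint {m : ℕ} {i j : ℕ} (h : i ≠ j) :
    Disjoint (blk m i) (blk m j) := by
  rw [Finset.disjoint_left]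
  intro a ha hb
  simp only [blk, Finset.mem_Ico] at ha hb
  rcases h.lt_or_gt with h' | h'
  · have : (i + 1) * m ≤ j * m := Nat.mul_le_mul_right _ h'
    rw [add_mul, one_mul] at this
    omega
  · have : (j + 1) * m ≤ i * m := Nat.mul_le_mul_right _ h'
    rw [add_mul, one_mul] at this
    omega

/-- Let `k, m` be positive integers with `m ∣ k` and `q := k/m` even. For a uniformly
random subset `A` of `{0,...,k+2m-1}`, the probability that none of
`k, k+1, ..., k+2m-1` lies in `A + A` is at most
`2^(q/2) · (1/2^m)^(q/2+1) = 2^(k/(2m)) · (1/2)^((k+2m)/2)`. -/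
theorem prob_consecutive_missing_le (k m : ℕ) (hm : 0 < m) (hk : 0 < k)
    (hdvd : m ∣ k) (hq : Even (k / m)) :
    (((Finset.range (k + 2 * m)).powerset.filter
        (fun A : Finset ℕ => ∀ t ∈ Finset.Icc k (k + 2 * m - 1), t ∉ A + A)).card : ℚ) /
        2 ^ (k + 2 * m) ≤
      2 ^ (k / m / 2) * ((1 : ℚ) / 2 ^ m) ^ (k / m / 2 + 1) := by
  obtain ⟨h, hqh⟩ := hq
  set q := k / m with hqdef
  have hkq : q * m = k := Nat.div_mul_cancel hdvd
  have hh2 : q / 2 = h := by omega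
  set N := k + 2 * m with hN
  -- the choosing function
  set f : Finset ℕ → ℕ → ℕ := fun ε j => if j ∈ ε then j else q - j with hf
  set I : Finset ℕ → Finset ℕ :=
    fun ε => insert h ((Finset.range h).image (f ε)) with hI
  set E : Finset ℕ → Finset ℕ := fun ε => (I ε).biUnion (blk m) with hE
  have hIle : ∀ ε, ∀ i ∈ I ε, i ≤ q := by
    intro ε i hi
    simp only [hI, Finset.mem_insert, Finset.mem_image, Finset.mem_range] at hi
    rcases hi with rfl | ⟨j, hj, rfl⟩
    · omega
    · simp only [hf]
      split <;> omega
  have hIcard : ∀ ε, (I ε).card = h + 1 := by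
    intro ε
    have himg : ((Finset.range h).image (f ε)).card = h := by
      rw [Finset.card_image_of_injOn, Finset.card_range]
      intro a ha b hb hab
      simp only [Finset.mem_coe, Finset.mem_range] at ha hb
      simp only [hf] at hab
      split_ifs at hab <;> omega
    rw [hI]
    rw [Finset.card_insert_of_notMem, himg]
    simp only [Finset.mem_image, Finset.mem_range]
    rintro ⟨j, hj, hjeq⟩
    simp only [hf] at hjeq
    split_ifs at hjeq <;> omega
  have hEcard : ∀ ε, (E ε).card = (h + 1) * m := by
    intro ε
    rw [hE]
    rw [Finset.card_biUnion (fun i _ j _ hij => blk_disjoint hij)]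
    simp [blk_card, hIcard ε, Finset.sum_const]
  have hEsub : ∀ ε, E ε ⊆ Finset.range N := by
    intro ε a ha
    simp only [hE, Finset.mem_biUnion] at ha
    obtain ⟨i, hi, hai⟩ := ha
    have hiq := hIle ε i hi
    simp only [blk, Finset.mem_Ico] at hai
    have : i * m ≤ q * m := Nat.mul_le_mul_right _ hiq
    simp only [Finset.mem_range, hN]
    omega
  -- the main subset step
  have hmain : (Finset.range N).powerset.filter
        (fun A : Finset ℕ => ∀ t ∈ Finset.Icc k (k + 2 * m - 1), t ∉ A + A) ⊆
      (Finset.range h).powerset.biUnion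
        (fun ε => (Finset.range N \ E ε).powerset) := by
    intro A hA
    rw [Finset.mem_filter, Finset.mem_powerset] at hA
    obtain ⟨hAsub, hP⟩ := hA
    -- key fact: no two elements of A can lie in blocks summing to q
    have key : ∀ i j a b, i + j = q → a ∈ A → b ∈ A →
        a ∈ blk m i → b ∈ blk m j → False := by
      intro i j a b hij ha hb hai hbj
      simp only [blk, Finset.mem_Ico] at hai hbj
      have hq1 : i * m + j * m = q * m := by rw [← add_mul, hij]
      refine hP (a + b) ?_ (Finset.add_mem_add ha hb)
      simp only [Finset.mem_Icc]
      omega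
    set ε : Finset ℕ :=
      (Finset.range h).filter (fun j => ∀ a ∈ A, a ∉ blk m j) with hε
    simp only [Finset.mem_biUnion]
    refine ⟨ε, ?_, ?_⟩
    · rw [Finset.mem_powerset, hε]; exact Finset.filter_subset _ _
    · rw [Finset.mem_powerset]
      intro a ha
      rw [Finset.mem_sdiff]
      refine ⟨hAsub ha, ?_⟩
      simp only [hE, Finset.mem_biUnion, not_exists, not_and]
      rintro i hi hai
      simp only [hI, Finset.mem_insert, Finset.mem_image, Finset.mem_range] at hi
      rcases hi with hih | ⟨j, hj, rfl⟩
      · rw [hih] at hai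
        exact key h h a a (by omega) ha ha hai hai
      · simp only [hf] at hai
        by_cases hjε : j ∈ ε
        · rw [if_pos hjε] at hai
          rw [hε, Finset.mem_filter] at hjε
          exact hjε.2 a ha hai
        · rw [if_neg hjε] at hai
          rw [hε, Finset.mem_filter] at hjε
          push_neg at hjε
          obtain ⟨b, hb, hbj⟩ := hjε (Finset.mem_range.mpr hj)
          exact key j (q - j) b a (by omega) hb ha hbj hai
  -- counting
  have hcount : ((Finset.range N).powerset.filter
        (fun A : Finset ℕ => ∀ t ∈ Finset.Icc k (k + 2 * m - 1), t ∉ A + A)).card ≤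
      2 ^ h * 2 ^ (N - (h + 1) * m) := by
    calc _ ≤ ((Finset.range h).powerset.biUnion
          (fun ε => (Finset.range N \ E ε).powerset)).card :=
            Finset.card_le_card hmain
      _ ≤ ∑ ε ∈ (Finset.range h).powerset, ((Finset.range N \ E ε).powerset).card :=
            Finset.card_biUnion_le
      _ = ∑ ε ∈ (Finset.range h).powerset, 2 ^ (N - (h + 1) * m) := by
            refine Finset.sum_congr rfl fun ε _ => ?_
            rw [Finset.card_powerset, Finset.card_sdiff_of_subset (hEsub ε), hEcard ε,
              Finset.card_range]
      _ = 2 ^ h * 2 ^ (N - (h + 1) * m) := by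
            rw [Finset.sum_const, Finset.card_powerset, Finset.card_range, smul_eq_mul]
  -- final arithmetic over ℚ
  have hle : (h + 1) * m ≤ N := by
    have h1 : h * m ≤ q * m := Nat.mul_le_mul_right _ (by omega)
    simp only [hN]
    rw [add_mul, one_mul]
    omega
  have hsplit : (2 : ℚ) ^ N = 2 ^ (N - (h + 1) * m) * 2 ^ ((h + 1) * m) := by
    rw [← pow_add, Nat.sub_add_cancel hle]
  rw [hh2]
  have hpos : (0 : ℚ) < 2 ^ N := by positivity
  rw [div_le_iff₀ hpos]
  calc ((Finset.range N).powerset.filter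
        (fun A : Finset ℕ => ∀ t ∈ Finset.Icc k (k + 2 * m - 1), t ∉ A + A)).card
      ≤ ((2 ^ h * 2 ^ (N - (h + 1) * m) : ℕ) : ℚ) := by exact_mod_cast hcount
    _ = 2 ^ h * (1 / 2 ^ m) ^ (h + 1) * 2 ^ N := by
        push_cast
        rw [hsplit, div_pow, one_pow, ← pow_mul, mul_comm m (h + 1)]
        have h2 : (2 : ℚ) ^ ((h + 1) * m) ≠ 0 := by positivity
        field_simp
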